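/- Let G be a finite abelian group with dual group Ĝ and let S ⊆ Ĝ be symmetric. Then the moment polytope M(G,S) equals the set of all ℓ ∈ ℂ^S for which there exists a Hermitian positive semidefinite matrix Y, with rows and columns indexed by Ĝ, such that Y_{χ,χ} = 1 for all χ ∈ Ĝ and Y_{χ,χ'} = ℓ_{χ⁻¹χ'} whenever χ⁻¹χ' ∈ S. -/

import Mathlib

open scoped Classical ComplexOrder
open scoped Matrix

/-- The dual group of a finite abelian group is finite. -/
noncomputable instance dualFintype (G : Type*) [CommGroup G] [Fintype G] :
    Fintype (G →* ℂˣ) := by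
  haveI : NeZero ((Monoid.exponent G : ℂ)) :=
    ⟨by exact_mod_cast Monoid.exponent_ne_zero_of_finite⟩
  exact Fintype.ofEquiv G
    (CommGroup.monoidHom_mulEquiv_of_hasEnoughRootsOfUnity G ℂ).some.symm.toEquiv

section Aux

variable {G : Type*} [CommGroup G] [Fintype G]

/-- The complex conjugate of a character value is the value of the inverse character. -/
lemma char_conj (χ : G →* ℂˣ) (x : G) :
    (starRingEnd ℂ) ((χ x : ℂˣ) : ℂ) = ((χ⁻¹ x : ℂˣ) : ℂ) := by
  have hpow : (((χ x : ℂˣ) : ℂ)) ^ Fintype.card G = 1 := by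
    have : (χ x) ^ Fintype.card G = 1 := by
      rw [← map_pow, pow_card_eq_one, map_one]
    rw [← Units.val_pow_eq_pow_val, this, Units.val_one]
  have hnorm : ‖((χ x : ℂˣ) : ℂ)‖ = 1 :=
    Complex.norm_eq_one_of_pow_eq_one hpow Fintype.card_ne_zero
  rw [MonoidHom.inv_apply, Units.val_inv_eq_inv_val, Complex.inv_eq_conj hnorm]

/-- Orthogonality: the sum of a nontrivial character over the group vanishes. -/
lemma sum_char (τ : G →* ℂˣ) :
    ∑ x : G, ((τ x : ℂˣ) : ℂ) = if τ = 1 then (Fintype.card G : ℂ) else 0 := by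
  split_ifs with h
  · subst h; simp
  · obtain ⟨y, hy⟩ : ∃ y, τ y ≠ 1 := by
      by_contra hc
      push_neg at hc
      exact h (MonoidHom.ext fun y => by simp [hc y])
    have hshift : ∑ x : G, ((τ (y * x) : ℂˣ) : ℂ) = ∑ x : G, ((τ x : ℂˣ) : ℂ) :=
      Fintype.sum_equiv (Equiv.mulLeft y) _ _ (fun x => rfl)
    have hmul : ((τ y : ℂˣ) : ℂ) * ∑ x : G, ((τ x : ℂˣ) : ℂ)
        = ∑ x : G, ((τ x : ℂˣ) : ℂ) := by
      rw [Finset.mul_sum, ← hshift]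
      simp [map_mul]
    have hy' : ((τ y : ℂˣ) : ℂ) ≠ 1 := by
      intro hc; exact hy (Units.ext hc)
    have hz : (((τ y : ℂˣ) : ℂ) - 1) * ∑ x : G, ((τ x : ℂˣ) : ℂ) = 0 := by
      rw [sub_mul, one_mul, hmul, sub_self]
    rcases mul_eq_zero.mp hz with h1 | h2
    · exact absurd (sub_eq_zero.mp h1) hy'
    · exact h2

lemma hom_inv_mul_cancel_left (χ τ : G →* ℂˣ) : χ⁻¹ * (χ * τ) = τ := by
  apply MonoidHom.ext; intro t
  simp only [MonoidHom.mul_apply, MonoidHom.inv_apply]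
  group

lemma hom_mul_one (χ : G →* ℂˣ) : χ * 1 = χ := by
  apply MonoidHom.ext; intro t
  simp

lemma hom_mul_inv_iff (χ χ' σ : G →* ℂˣ) : χ * χ'⁻¹ * σ = 1 ↔ χ' = χ * σ := by
  constructor
  · intro h
    apply MonoidHom.ext; intro t
    have ht := DFunLike.congr_fun h t
    simp only [MonoidHom.mul_apply, MonoidHom.inv_apply, MonoidHom.one_apply] at ht
    simp only [MonoidHom.mul_apply]
    rw [mul_right_comm, mul_inv_eq_one] at ht
    exact ht.symm
  · rintro rfl
    apply MonoidHom.ext; intro t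
    simp only [MonoidHom.mul_apply, MonoidHom.inv_apply, MonoidHom.one_apply]
    rw [mul_inv_rev]
    simp [mul_comm, mul_left_comm]

lemma card_dual : Fintype.card (G →* ℂˣ) = Fintype.card G := by
  haveI : NeZero ((Monoid.exponent G : ℂ)) :=
    ⟨by exact_mod_cast Monoid.exponent_ne_zero_of_finite⟩
  exact Fintype.card_congr
    (CommGroup.monoidHom_mulEquiv_of_hasEnoughRootsOfUnity G ℂ).some.toEquiv

end Aux

/-- **Moment polytope via unstructured PSD matrix completion.** For a symmetric subset
`S` of the dual group, the moment polytope `M(G,S) = conv{(χ(x))_{χ∈S} : x ∈ G}` equals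
the set of `ℓ ∈ ℂ^S` that can be completed to a Hermitian positive semidefinite matrix
`Y`, indexed by `Ĝ`, with unit diagonal and `Y_{χ,χ'} = ℓ_{χ⁻¹χ'}` whenever
`χ⁻¹χ' ∈ S`. -/
theorem moment_polytope_unstructured
    (G : Type*) [CommGroup G] [Fintype G]
    (S : Set (G →* ℂˣ)) (hS : ∀ χ ∈ S, χ⁻¹ ∈ S) :
    convexHull ℝ {ℓ : ↥S → ℂ | ∃ x : G, ℓ = fun χ : ↥S => (((χ : G →* ℂˣ) x : ℂˣ) : ℂ)} =
    {ℓ : ↥S → ℂ | ∃ Y : Matrix (G →* ℂˣ) (G →* ℂˣ) ℂ, Y.PosSemidef ∧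
      (∀ χ : G →* ℂˣ, Y χ χ = 1) ∧
      ∀ (χ χ' : G →* ℂˣ) (h : χ⁻¹ * χ' ∈ S), Y χ χ' = ℓ ⟨χ⁻¹ * χ', h⟩} := by
  apply Set.Subset.antisymm
  · -- forward: convex hull is inside the PSD-completable set
    apply convexHull_min
    · rintro ℓ ⟨x, rfl⟩
      set Y0 : Matrix (G →* ℂˣ) (G →* ℂˣ) ℂ :=
        fun χ χ' => (starRingEnd ℂ) ((χ x : ℂˣ) : ℂ) * ((χ' x : ℂˣ) : ℂ) with hY0
      refine ⟨Y0, Matrix.posSemidef_iff_dotProduct_mulVec.mpr ⟨?_, ?_⟩, ?_, ?_⟩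
      · ext χ χ'
        show star (Y0 χ' χ) = Y0 χ χ'
        rw [hY0]
        simp only [star_mul', RingHomCompTriple.comp_apply, RingHom.id_apply]
        simp [mul_comm]
      · intro z
        have key : star z ⬝ᵥ Y0 *ᵥ z
            = star (∑ χ : G →* ℂˣ, ((χ x : ℂˣ) : ℂ) * z χ) *
              (∑ χ : G →* ℂˣ, ((χ x : ℂˣ) : ℂ) * z χ) := by
          rw [star_sum, Finset.sum_mul_sum]
          simp only [dotProduct, Matrix.mulVec, hY0, Finset.mul_sum,
            Pi.star_apply, star_mul', Complex.star_def]
          apply Finset.sum_congr rfl; intro χ _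
          apply Finset.sum_congr rfl; intro χ' _
          ring
        rw [key]
        exact star_mul_self_nonneg _
      · intro χ
        show (starRingEnd ℂ) ((χ x : ℂˣ) : ℂ) * ((χ x : ℂˣ) : ℂ) = 1
        rw [char_conj, ← Units.val_mul, ← MonoidHom.mul_apply, inv_mul_cancel]
        simp
      · intro χ χ' h
        show (starRingEnd ℂ) ((χ x : ℂˣ) : ℂ) * ((χ' x : ℂˣ) : ℂ) = _
        rw [char_conj, ← Units.val_mul, ← MonoidHom.mul_apply]
    · -- the right-hand set is convex
      rintro ℓ₁ ⟨Y₁, hY₁, hd₁, hc₁⟩ ℓ₂ ⟨Y₂, hY₂, hd₂, hc₂⟩ a b ha hb hab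
      refine ⟨(a : ℂ) • Y₁ + (b : ℂ) • Y₂, Matrix.posSemidef_iff_dotProduct_mulVec.mpr ⟨?_, ?_⟩, ?_, ?_⟩
      · unfold Matrix.IsHermitian
        rw [Matrix.conjTranspose_add, Matrix.conjTranspose_smul, Matrix.conjTranspose_smul,
          hY₁.1, hY₂.1, Complex.star_def, Complex.conj_ofReal, Complex.conj_ofReal]
      · intro z
        have : star z ⬝ᵥ ((a : ℂ) • Y₁ + (b : ℂ) • Y₂) *ᵥ z
            = (a : ℂ) * (star z ⬝ᵥ Y₁ *ᵥ z) + (b : ℂ) * (star z ⬝ᵥ Y₂ *ᵥ z) := by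
          simp [Matrix.add_mulVec, Matrix.smul_mulVec, dotProduct_add,
            dotProduct_smul, smul_eq_mul]
        rw [this]
        exact add_nonneg (mul_nonneg (by exact_mod_cast ha) (hY₁.dotProduct_mulVec_nonneg z))
          (mul_nonneg (by exact_mod_cast hb) (hY₂.dotProduct_mulVec_nonneg z))
      · intro χ
        simp only [Matrix.add_apply, Matrix.smul_apply, hd₁ χ, hd₂ χ, smul_eq_mul, mul_one]
        exact_mod_cast congrArg (fun r : ℝ => (r : ℂ)) hab
      · intro χ χ' h
        simp only [Matrix.add_apply, Matrix.smul_apply, hc₁ χ χ' h, hc₂ χ χ' h, smul_eq_mul,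
          Pi.add_apply, Pi.smul_apply, Complex.real_smul]
  · -- backward: a PSD completion yields a convex combination
    rintro ℓ ⟨Y, hY, hdiag, hcons⟩
    set n : ℂ := (Fintype.card G : ℂ) with hn
    have hn0 : n ≠ 0 := by simp [hn, Fintype.card_ne_zero]
    set c : ℂ := ((Fintype.card G : ℝ) ^ 2 : ℝ)⁻¹ with hc
    have hcn : c = (n ^ 2)⁻¹ := by rw [hc, hn]; push_cast; ring
    set v : G → (G →* ℂˣ) → ℂ := fun x χ => ((χ⁻¹ x : ℂˣ) : ℂ) with hv
    set p : G → ℂ := fun x => c * (star (v x) ⬝ᵥ Y *ᵥ (v x)) with hp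
    have hp0 : ∀ x, 0 ≤ p x := by
      intro x
      refine mul_nonneg ?_ (hY.dotProduct_mulVec_nonneg (v x))
      rw [hc]
      have : (0:ℝ) ≤ ((Fintype.card G : ℝ) ^ 2 : ℝ)⁻¹ := by positivity
      exact_mod_cast this
    have hquad : ∀ x, star (v x) ⬝ᵥ Y *ᵥ (v x)
        = ∑ χ : G →* ℂˣ, ∑ χ' : G →* ℂˣ,
            ((χ x : ℂˣ) : ℂ) * (Y χ χ' * ((χ'⁻¹ x : ℂˣ) : ℂ)) := by
      intro x
      simp only [dotProduct, Matrix.mulVec, Pi.star_apply, Finset.mul_sum]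
      apply Finset.sum_congr rfl; intro χ _
      have hsv : star (v x χ) = ((χ x : ℂˣ) : ℂ) := by
        show star ((χ⁻¹ x : ℂˣ) : ℂ) = _
        rw [Complex.star_def, char_conj, MonoidHom.inv_apply, MonoidHom.inv_apply, inv_inv]
      apply Finset.sum_congr rfl; intro χ' _
      rw [hsv]
    -- the key Fourier identity
    have hkey : ∀ σ : G →* ℂˣ, ∑ x : G, p x * ((σ x : ℂˣ) : ℂ)
        = (∑ χ : G →* ℂˣ, Y χ (χ * σ)) / n := by
      intro σ
      have expand : ∀ x, p x * ((σ x : ℂˣ) : ℂ)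
          = c * ∑ χ : G →* ℂˣ, ∑ χ' : G →* ℂˣ,
              Y χ χ' * (((χ * χ'⁻¹ * σ) x : ℂˣ) : ℂ) := by
        intro x
        rw [hp]
        simp only
        rw [hquad x, mul_assoc, Finset.sum_mul]
        congr 1
        apply Finset.sum_congr rfl; intro χ _
        rw [Finset.sum_mul]
        apply Finset.sum_congr rfl; intro χ' _
        simp only [MonoidHom.mul_apply, Units.val_mul]
        ring
      calc ∑ x : G, p x * ((σ x : ℂˣ) : ℂ)
          = c * ∑ x : G, ∑ χ : G →* ℂˣ, ∑ χ' : G →* ℂˣ,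
              Y χ χ' * (((χ * χ'⁻¹ * σ) x : ℂˣ) : ℂ) := by
            rw [Finset.mul_sum]
            exact Finset.sum_congr rfl fun x _ => expand x
        _ = c * ∑ χ : G →* ℂˣ, ∑ χ' : G →* ℂˣ,
              Y χ χ' * ∑ x : G, (((χ * χ'⁻¹ * σ) x : ℂˣ) : ℂ) := by
            congr 1
            rw [Finset.sum_comm]
            apply Finset.sum_congr rfl; intro χ _
            rw [Finset.sum_comm]
            apply Finset.sum_congr rfl; intro χ' _
            rw [Finset.mul_sum]
        _ = c * ∑ χ : G →* ℂˣ, ∑ χ' : G →* ℂˣ,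
              Y χ χ' * (if χ * χ'⁻¹ * σ = 1 then n else 0) := by
            congr 1
            apply Finset.sum_congr rfl; intro χ _
            apply Finset.sum_congr rfl; intro χ' _
            rw [sum_char]
        _ = c * ∑ χ : G →* ℂˣ, Y χ (χ * σ) * n := by
            congr 1
            apply Finset.sum_congr rfl; intro χ _
            have hiff : ∀ χ' : G →* ℂˣ, (χ * χ'⁻¹ * σ = 1) ↔ χ' = χ * σ :=
              fun χ' => hom_mul_inv_iff χ χ' σ
            simp only [hiff, mul_ite, mul_zero]
            rw [Finset.sum_ite_eq' Finset.univ (χ * σ) (fun χ' => Y χ χ' * n)]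
            simp
        _ = (∑ χ : G →* ℂˣ, Y χ (χ * σ)) / n := by
            rw [← Finset.sum_mul, hcn]
            field_simp
    have hcard : (Fintype.card (G →* ℂˣ) : ℂ) = n := by
      rw [hn]; exact_mod_cast congrArg Nat.cast card_dual
    have hℓσ : ∀ σ : ↥S, ∑ x : G, p x * (((σ : G →* ℂˣ) x : ℂˣ) : ℂ) = ℓ σ := by
      intro σ
      rw [hkey (σ : G →* ℂˣ)]
      have hYσ : ∀ χ : G →* ℂˣ, Y χ (χ * (σ : G →* ℂˣ)) = ℓ σ := by
        intro χ
        have hmem : χ⁻¹ * (χ * (σ : G →* ℂˣ)) ∈ S := by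
          rw [hom_inv_mul_cancel_left]; exact σ.2
        rw [hcons χ (χ * (σ : G →* ℂˣ)) hmem]
        congr 1
        exact Subtype.ext (hom_inv_mul_cancel_left _ _)
      simp_rw [hYσ]
      rw [Finset.sum_const, Finset.card_univ, nsmul_eq_mul, hcard]
      field_simp
    have hsum1 : ∑ x : G, p x = 1 := by
      have h1 := hkey 1
      simp only [MonoidHom.one_apply, Units.val_one, mul_one] at h1
      rw [h1]
      have hd : ∀ χ : G →* ℂˣ, Y χ (χ * 1) = (1 : ℂ) := fun χ => by
        rw [hom_mul_one]; exact hdiag χ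
      simp_rw [hd]
      rw [Finset.sum_const, Finset.card_univ, nsmul_eq_mul, mul_one, hcard]
      exact div_self hn0
    set w : G → ℝ := fun x => (p x).re with hw
    have hwp : ∀ x, (w x : ℂ) = p x := by
      intro x
      have h := hp0 x
      rw [Complex.le_def] at h
      apply Complex.ext
      · simp [hw]
      · simp [hw, ← h.2]
    have hw0 : ∀ x, 0 ≤ w x := by
      intro x
      have h := hp0 x
      rw [Complex.le_def] at h
      simpa using h.1
    have hwsum : ∑ x : G, w x = 1 := by
      have h : ((∑ x : G, w x : ℝ) : ℂ) = 1 := by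
        push_cast
        simp_rw [hwp]
        exact hsum1
      exact_mod_cast h
    have hℓeq : ℓ = Finset.univ.centerMass w
        (fun x : G => fun χ : ↥S => (((χ : G →* ℂˣ) x : ℂˣ) : ℂ)) := by
      rw [Finset.centerMass, hwsum]
      funext σ
      simp only [inv_one, one_smul, Finset.sum_apply, Pi.smul_apply, Complex.real_smul, hwp]
      exact (hℓσ σ).symm
    rw [hℓeq]
    exact Finset.centerMass_mem_convexHull _ (fun i _ => hw0 i)
      (by rw [hwsum]; norm_num) (fun i _ => ⟨i, rfl⟩)
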